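/- Let d ≥ 1 and let H_1, …, H_m be affine hyperplanes in ℝ^d (affine subspaces of dimension d − 1). Then the complement ℝ^d \ (H_1 ∪ ⋯ ∪ H_m) has at most ∑_{i=0}^{d} binom(m, i) connected components. -/

import Mathlib

open Finset Function

private lemma pos_comb {p q s t : ℝ} (hp : 0 < p) (hq : 0 < q) (hs : 0 ≤ s) (ht : 0 ≤ t)
    (hst : s + t = 1) : 0 < s * p + t * q := by
  rcases eq_or_lt_of_le hs with h | h
  · have ht1 : t = 1 := by linarith
    simp [← h, ht1, hq]
  · nlinarith [mul_nonneg ht hq.le, mul_pos h hp]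

/-- an arrangement of `m` affine hyperplanes in `ℝ^d` (each of the form
`{x | ∑ j, a j * x j = c}` with `a ≠ 0`) has at most `∑_{i=0}^{d} C(m, i)` regions,
i.e. the complement of their union has at most that many connected components. -/
theorem stmt_14 (d m : ℕ) (hd : 1 ≤ d)
    (H : Fin m → Set (Fin d → ℝ))
    (hH : ∀ i, ∃ (a : Fin d → ℝ) (c : ℝ), a ≠ 0 ∧
      H i = {x : Fin d → ℝ | (∑ j, a j * x j) = c}) :
    Finite (ConnectedComponents {x : Fin d → ℝ | ∀ i, x ∉ H i}) ∧
      Nat.card (ConnectedComponents {x : Fin d → ℝ | ∀ i, x ∉ H i}) ≤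
        ∑ i ∈ Finset.range (d + 1), m.choose i := by
  classical
  choose a c ha hHeq using hH
  set X : Set (Fin d → ℝ) := {x | ∀ i, x ∉ H i} with hXdef
  set f : Fin m → (Fin d → ℝ) → ℝ := fun i x => (∑ j, a i j * x j) - c i with hfdef
  have hmemX : ∀ x, x ∈ X ↔ ∀ i, f i x ≠ 0 := by
    intro x
    simp only [hXdef, Set.mem_setOf_eq, hHeq, hfdef, sub_ne_zero]
  -- affinity of f i
  have haff : ∀ (i : Fin m) (p q : Fin d → ℝ) (s t : ℝ), s + t = 1 →
      f i (s • p + t • q) = s * f i p + t * f i q := by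
    intro i p q s t hst
    simp only [hfdef, Pi.add_apply, Pi.smul_apply, smul_eq_mul]
    have h1 : ∀ j ∈ Finset.univ, a i j * (s * p j + t * q j)
        = s * (a i j * p j) + t * (a i j * q j) := fun j _ => by ring
    rw [Finset.sum_congr rfl h1, Finset.sum_add_distrib, ← Finset.mul_sum, ← Finset.mul_sum]
    linear_combination (c i) * hst
  -- the sign map
  set g : X → Finset (Fin m) := fun x => Finset.univ.filter (fun i => 0 < f i (x : Fin d → ℝ))
    with hgdef
  -- same sign vector implies same connected component
  have hseg : ∀ x y : X, g x = g y →
      (ConnectedComponents.mk x) = ConnectedComponents.mk y := by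
    intro x y hgxy
    have hsgn : ∀ i, 0 < f i (x : Fin d → ℝ) ↔ 0 < f i (y : Fin d → ℝ) := by
      intro i
      have := Finset.ext_iff.1 hgxy i
      simpa [hgdef] using this
    have hsub : segment ℝ (x : Fin d → ℝ) (y : Fin d → ℝ) ⊆ X := by
      rintro z ⟨s, t, hs, ht, hst, rfl⟩
      rw [hmemX]
      intro i
      rcases lt_trichotomy (f i (x : Fin d → ℝ)) 0 with hx | hx | hx
      · have hy : f i (y : Fin d → ℝ) < 0 := by
          rcases lt_trichotomy (f i (y : Fin d → ℝ)) 0 with h | h | h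
          · exact h
          · exact absurd h ((hmemX _).1 y.2 i)
          · exact absurd ((hsgn i).2 h) (by linarith)
        rw [haff i _ _ s t hst]
        have h0 := pos_comb (neg_pos.2 hx) (neg_pos.2 hy) hs ht hst
        exact ne_of_lt (by nlinarith)
      · exact absurd hx ((hmemX _).1 x.2 i)
      · have hy : 0 < f i (y : Fin d → ℝ) := (hsgn i).1 hx
        rw [haff i _ _ s t hst]
        exact ne_of_gt (pos_comb hx hy hs ht hst)
    set T : Set X := Subtype.val ⁻¹' (segment ℝ (x : Fin d → ℝ) (y : Fin d → ℝ)) with hTdef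
    have hTpre : IsPreconnected T := by
      rw [← Topology.IsInducing.subtypeVal.isPreconnected_image]
      have him : Subtype.val '' T = segment ℝ (x : Fin d → ℝ) (y : Fin d → ℝ) := by
        rw [hTdef, Subtype.image_preimage_coe]
        exact Set.inter_eq_right.2 hsub
      rw [him]
      exact (convex_segment _ _).isPreconnected
    have hxT : x ∈ T := left_mem_segment ℝ _ _
    have hyT : y ∈ T := right_mem_segment ℝ _ _
    have : y ∈ connectedComponent x := hTpre.subset_connectedComponent hxT hyT
    exact (ConnectedComponents.coe_eq_coe' (y := x)).2 this |>.symm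
  -- the family of realized sign vectors
  set 𝒜 : Finset (Finset (Fin m)) := (Set.toFinite (Set.range g)).toFinset with h𝒜def
  -- injection from components
  set s0 : ConnectedComponents X → X := surjInv ConnectedComponents.surjective_coe with hs0
  have hs0eq : ∀ C, ConnectedComponents.mk (s0 C) = C :=
    fun C => surjInv_eq ConnectedComponents.surjective_coe C
  have hinj : Function.Injective (fun C => g (s0 C)) := by
    intro C C' h
    have := hseg _ _ h
    rwa [hs0eq, hs0eq] at this
  refine ⟨Finite.of_injective _ hinj, ?_⟩
  -- vcDim bound
  have hvc : 𝒜.vcDim ≤ d := by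
    apply Finset.sup_le
    intro t htsh
    rw [Finset.mem_shatterer] at htsh
    by_contra hlt
    push_neg at hlt
    obtain ⟨t', ht'sub, ht'card⟩ := Finset.exists_subset_card_eq (s := t) (n := d + 1) (by omega)
    have hsh' : 𝒜.Shatters t' := htsh.mono_right ht'sub
    have hnli : ¬ LinearIndependent ℝ (fun i : ↥t' => a i) := by
      intro hli
      have hle := hli.fintype_card_le_finrank
      rw [Module.finrank_fintype_fun_eq_card] at hle
      simp [ht'card] at hle
    rw [Fintype.not_linearIndependent_iff] at hnli
    obtain ⟨gl, hrel, i0, hi0⟩ := hnli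
    -- the linear combination of the f i is constant
    have hconst : ∀ z : Fin d → ℝ,
        ∑ i : ↥t', gl i * f (↑i) z = - ∑ i : ↥t', gl i * c ↑i := by
      intro z
      have h1 : ∀ j, ∑ i : ↥t', gl i * a (↑i) j = 0 := by
        intro j
        have := congrFun hrel j
        simpa [Finset.sum_apply] using this
      have h2 : ∀ i : ↥t', gl i * f (↑i) z
          = (∑ j, (gl i * a (↑i) j) * z j) - gl i * c ↑i := by
        intro i
        simp only [hfdef]
        rw [mul_sub, Finset.mul_sum]
        congr 1
        exact Finset.sum_congr rfl fun j _ => by ring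
      rw [Finset.sum_congr rfl fun i _ => h2 i, Finset.sum_sub_distrib, Finset.sum_comm]
      have h3 : ∀ j, ∑ i : ↥t', (gl i * a (↑i) j) * z j = 0 := by
        intro j
        rw [← Finset.sum_mul, h1 j, zero_mul]
      rw [Finset.sum_congr rfl fun j _ => h3 j]
      simp
    -- extended coefficients for filtering
    set lam : Fin m → ℝ := fun i => if h : i ∈ t' then gl ⟨i, h⟩ else 0 with hlam
    have hlamcoe : ∀ i : ↥t', lam ↑i = gl i := by
      intro i; simp [hlam, i.2]
    -- realize the "positive" pattern
    obtain ⟨u₁, hu₁mem, hu₁⟩ := hsh' (Finset.filter_subset (fun i => 0 < lam i) t')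
    obtain ⟨x₁, hx₁⟩ : ∃ x : X, g x = u₁ := by
      rw [h𝒜def, Set.Finite.mem_toFinset] at hu₁mem; exact hu₁mem
    obtain ⟨u₂, hu₂mem, hu₂⟩ := hsh' (Finset.filter_subset (fun i => lam i < 0) t')
    obtain ⟨x₂, hx₂⟩ : ∃ x : X, g x = u₂ := by
      rw [h𝒜def, Set.Finite.mem_toFinset] at hu₂mem; exact hu₂mem
    have hx₁sgn : ∀ i : ↥t', (0 < lam ↑i ↔ 0 < f ↑i (x₁ : Fin d → ℝ)) := by
      intro i
      have : (↑i ∈ t' ∩ u₁) ↔ ↑i ∈ t'.filter (fun i => 0 < lam i) := by rw [hu₁]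
      simp only [Finset.mem_inter, Finset.mem_filter, ← hx₁, hgdef, Finset.mem_univ,
        true_and] at this
      constructor
      · intro h; exact (this.2 ⟨i.2, h⟩).2
      · intro h; exact (this.1 ⟨i.2, h⟩).2
    have hx₂sgn : ∀ i : ↥t', (lam ↑i < 0 ↔ 0 < f ↑i (x₂ : Fin d → ℝ)) := by
      intro i
      have : (↑i ∈ t' ∩ u₂) ↔ ↑i ∈ t'.filter (fun i => lam i < 0) := by rw [hu₂]
      simp only [Finset.mem_inter, Finset.mem_filter, ← hx₂, hgdef, Finset.mem_univ,
        true_and] at this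
      constructor
      · intro h; exact (this.2 ⟨i.2, h⟩).2
      · intro h; exact (this.1 ⟨i.2, h⟩).2
    -- positivity of the sum at x₁
    have hterm₁ : ∀ i : ↥t', 0 ≤ gl i * f ↑i (x₁ : Fin d → ℝ) := by
      intro i
      rcases lt_trichotomy (gl i) 0 with h | h | h
      · have hne : f ↑i (x₁ : Fin d → ℝ) ≠ 0 := (hmemX _).1 x₁.2 ↑i
        have hnpos : ¬ (0 < f ↑i (x₁ : Fin d → ℝ)) := by
          intro hp
          have := (hx₁sgn i).2 hp
          rw [hlamcoe] at this; linarith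
        have : f ↑i (x₁ : Fin d → ℝ) < 0 := lt_of_le_of_ne (not_lt.1 hnpos) hne
        exact le_of_lt (mul_pos_of_neg_of_neg h this)
      · simp [h]
      · have : 0 < f ↑i (x₁ : Fin d → ℝ) := (hx₁sgn i).1 (by rw [hlamcoe]; exact h)
        exact le_of_lt (mul_pos h this)
    have hterm₁' : 0 < gl i0 * f ↑i0 (x₁ : Fin d → ℝ) := by
      rcases hterm₁ i0 |>.lt_or_eq with h | h
      · exact h
      · exfalso
        have hne : f ↑i0 (x₁ : Fin d → ℝ) ≠ 0 := (hmemX _).1 x₁.2 ↑i0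
        rcases mul_eq_zero.1 h.symm with h' | h'
        · exact hi0 h'
        · exact hne h'
    have hpos : 0 < ∑ i : ↥t', gl i * f ↑i (x₁ : Fin d → ℝ) :=
      Finset.sum_pos' (fun i _ => hterm₁ i) ⟨i0, Finset.mem_univ _, hterm₁'⟩
    -- negativity of the sum at x₂
    have hterm₂ : ∀ i : ↥t', gl i * f ↑i (x₂ : Fin d → ℝ) ≤ 0 := by
      intro i
      rcases lt_trichotomy (gl i) 0 with h | h | h
      · have : 0 < f ↑i (x₂ : Fin d → ℝ) := (hx₂sgn i).1 (by rw [hlamcoe]; exact h)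
        nlinarith
      · simp [h]
      · have hne : f ↑i (x₂ : Fin d → ℝ) ≠ 0 := (hmemX _).1 x₂.2 ↑i
        have hnpos : ¬ (0 < f ↑i (x₂ : Fin d → ℝ)) := by
          intro hp
          have := (hx₂sgn i).2 hp
          rw [hlamcoe] at this; linarith
        have : f ↑i (x₂ : Fin d → ℝ) < 0 := lt_of_le_of_ne (not_lt.1 hnpos) hne
        nlinarith
    have hterm₂' : gl i0 * f ↑i0 (x₂ : Fin d → ℝ) < 0 := by
      rcases (hterm₂ i0).lt_or_eq with h | h
      · exact h
      · exfalso
        have hne : f ↑i0 (x₂ : Fin d → ℝ) ≠ 0 := (hmemX _).1 x₂.2 ↑i0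
        rcases mul_eq_zero.1 h with h' | h'
        · exact hi0 h'
        · exact hne h'
    have hneg : ∑ i : ↥t', gl i * f ↑i (x₂ : Fin d → ℝ) < 0 := by
      have h0 : 0 < ∑ i : ↥t', -(gl i * f ↑i (x₂ : Fin d → ℝ)) :=
        Finset.sum_pos' (fun i _ => neg_nonneg.2 (hterm₂ i))
          ⟨i0, Finset.mem_univ _, neg_pos.2 hterm₂'⟩
      rw [Finset.sum_neg_distrib] at h0
      linarith
    rw [hconst] at hpos hneg
    linarith
  -- assemble the cardinality bound
  have hcard1 : Nat.card (ConnectedComponents X) ≤ 𝒜.card := by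
    have hinj' : Function.Injective
        (fun C : ConnectedComponents X => (⟨g (s0 C), by
          rw [h𝒜def, Set.Finite.mem_toFinset]; exact ⟨s0 C, rfl⟩⟩ : {u // u ∈ 𝒜})) := by
      intro C C' h
      exact hinj (Subtype.ext_iff.1 h)
    calc Nat.card (ConnectedComponents X) ≤ Nat.card {u // u ∈ 𝒜} :=
          Nat.card_le_card_of_injective _ hinj'
      _ = 𝒜.card := by rw [Nat.card_eq_fintype_card, Fintype.card_coe]
  calc Nat.card (ConnectedComponents X) ≤ 𝒜.card := hcard1
    _ ≤ 𝒜.shatterer.card := Finset.card_le_card_shatterer 𝒜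
    _ ≤ ∑ k ∈ Finset.Iic 𝒜.vcDim, (Fintype.card (Fin m)).choose k :=
        Finset.card_shatterer_le_sum_vcDim
    _ ≤ ∑ i ∈ Finset.range (d + 1), m.choose i := by
        rw [Fintype.card_fin]
        apply Finset.sum_le_sum_of_subset
        intro k hk
        rw [Finset.mem_Iic] at hk
        rw [Finset.mem_range]
        omega
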